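/- Let P be the probability measure on ℕ with P({n}) = 1/2^n for n ≥ 1. The second quantization error V_2 = inf over α ⊂ ℝ with |α| ≤ 2 of ∑_n (1/2^n) min_{a∈α}(n−a)² equals 2/3, attained at the set {4/3, 4}. -/

import Mathlib

open Finset

/- Basic geometric series facts -/
lemma sumS0 : ∑' n : ℕ, ((1:ℝ)/2)^n = 2 := by
  rw [tsum_geometric_of_lt_one (by norm_num) (by norm_num)]; norm_num

lemma summ0 : Summable (fun n : ℕ => ((1:ℝ)/2)^n) :=
  summable_geometric_of_lt_one (by norm_num) (by norm_num)

lemma summ1 : Summable (fun n : ℕ => (n:ℝ) * (1/2)^n) := by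
  have := summable_pow_mul_geometric_of_norm_lt_one (R := ℝ) 1 (r := 1/2) (by norm_num)
  simpa using this

lemma summ2 : Summable (fun n : ℕ => (n:ℝ)^2 * (1/2)^n) := by
  have := summable_pow_mul_geometric_of_norm_lt_one (R := ℝ) 2 (r := 1/2) (by norm_num)
  simpa using this

lemma sumS1 : ∑' n : ℕ, (n:ℝ) * (1/2)^n = 2 := by
  have := tsum_coe_mul_geometric_of_norm_lt_one (𝕜 := ℝ) (r := 1/2) (by norm_num)
  rw [this]; norm_num

lemma sumS2 : ∑' n : ℕ, (n:ℝ)^2 * (1/2)^n = 6 := by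
  have h := summ2
  have hshift := Summable.tsum_eq_zero_add h
  have hdecomp : ∀ n : ℕ, ((n+1:ℕ):ℝ)^2 * (1/2)^((n:ℕ)+1)
      = ((1/2) * ((n:ℝ)^2 * (1/2)^n) + (n:ℝ) * (1/2)^n) + (1/2) * (1/2)^n := by
    intro n; push_cast; ring
  rw [tsum_congr hdecomp] at hshift
  rw [Summable.tsum_add ((h.mul_left _).add summ1) (summ0.mul_left _)] at hshift
  rw [Summable.tsum_add (h.mul_left _) summ1] at hshift
  rw [tsum_mul_left, tsum_mul_left, sumS1, sumS0] at hshift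
  norm_num at hshift
  linarith

lemma summT (c : ℝ) : Summable (fun n : ℕ => ((n:ℝ) - c)^2 * (1/2)^n) := by
  have h : ∀ n : ℕ, ((n:ℝ) - c)^2 * (1/2)^n
      = (n:ℝ)^2 * (1/2)^n + (-2*c) * ((n:ℝ) * (1/2)^n) + c^2 * (1/2)^n := by
    intro n; ring
  exact (funext h : _) ▸ ((summ2.add (summ1.mul_left _)).add (summ0.mul_left _))

lemma sumT (c : ℝ) : ∑' n : ℕ, ((n:ℝ) - c)^2 * (1/2)^n = 2*c^2 - 4*c + 6 := by
  have h : ∀ n : ℕ, ((n:ℝ) - c)^2 * (1/2)^n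
      = ((n:ℝ)^2 * (1/2)^n + (-2*c) * ((n:ℝ) * (1/2)^n)) + c^2 * (1/2)^n := by
    intro n; ring
  rw [tsum_congr h]
  rw [Summable.tsum_add (summ2.add (summ1.mul_left _)) (summ0.mul_left _)]
  rw [Summable.tsum_add summ2 (summ1.mul_left _)]
  rw [tsum_mul_left, tsum_mul_left, sumS0, sumS1, sumS2]
  ring

lemma summQ (c : ℝ) : Summable (fun n : ℕ => (1/2^(n+1) : ℝ) * ((n:ℝ)+1 - c)^2) := by
  have h : ∀ n : ℕ, (1/2^(n+1) : ℝ) * ((n:ℝ)+1 - c)^2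
      = (1/2) * (((n:ℝ) - (c-1))^2 * (1/2)^n) := by
    intro n
    rw [one_div, one_div, pow_succ, mul_inv, inv_pow]
    ring
  exact (funext h : _) ▸ ((summT (c-1)).mul_left _)

/- min function and its summability -/
lemma minNonneg (a b : ℝ) (n : ℕ) :
    0 ≤ (1/2^(n+1) : ℝ) * min (((n:ℝ)+1 - a)^2) (((n:ℝ)+1 - b)^2) := by
  apply mul_nonneg (by positivity)
  exact le_min (sq_nonneg _) (sq_nonneg _)

lemma summMin (a b : ℝ) :
    Summable (fun n : ℕ => (1/2^(n+1) : ℝ) * min (((n:ℝ)+1 - a)^2) (((n:ℝ)+1 - b)^2)) := by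
  apply Summable.of_nonneg_of_le (fun n => minNonneg a b n) (fun n => ?_) (summQ a)
  apply mul_le_mul_of_nonneg_left (min_le_left _ _) (by positivity)

/- Key lower bound -/
lemma lowerBound (a b : ℝ) (hab : a ≤ b) :
    2/3 ≤ ∑' n : ℕ, (1/2^(n+1) : ℝ) * min (((n:ℝ)+1 - a)^2) (((n:ℝ)+1 - b)^2) := by
  set f : ℕ → ℝ := fun n => (1/2^(n+1) : ℝ) * min (((n:ℝ)+1 - a)^2) (((n:ℝ)+1 - b)^2) with hf
  have hsf : Summable f := summMin a b
  have key : ∀ x : ℝ, a + b ≤ 2*x →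
      min ((x - a)^2) ((x - b)^2) = (x - b)^2 := by
    intro x hx; apply min_eq_right; nlinarith
  have keyL : ∀ x : ℝ, 2*x ≤ a + b →
      min ((x - a)^2) ((x - b)^2) = (x - a)^2 := by
    intro x hx; apply min_eq_left; nlinarith
  rcases le_or_gt (a+b) 4 with h1 | h1
  · -- midpoint ≤ 2 : all n ≥ 1 assigned to b
    rw [← Summable.sum_add_tsum_nat_add 1 hsf]
    have htail : ∑' n : ℕ, f (n + 1) = (1/2)^2 * (2*(b-2)^2 - 4*(b-2) + 6) := by
      have hpt : ∀ n : ℕ, f (n + 1)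
          = (1/2)^2 * ((((n:ℝ) - (b-2))^2) * (1/2)^n) := by
        intro n
        simp only [hf]
        push_cast
        rw [key ((n:ℝ)+1+1) (by nlinarith [Nat.cast_nonneg (α := ℝ) n])]
        rw [one_div, one_div, pow_add, mul_inv, inv_pow]
        ring_nf
        simp only [one_div]; ring
      rw [tsum_congr hpt, tsum_mul_left, sumT]
    rw [htail]
    have h0 : 0 ≤ ∑ i ∈ Finset.range 1, f i := by
      apply Finset.sum_nonneg; intro i _; exact minNonneg a b i
    nlinarith [sq_nonneg (b-3)]
  · rcases le_or_gt (a+b) 6 with h2 | h2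
    · -- 2 ≤ midpoint ≤ 3
      rw [← Summable.sum_add_tsum_nat_add 2 hsf]
      have htail : ∑' n : ℕ, f (n + 2) = (1/2)^3 * (2*(b-3)^2 - 4*(b-3) + 6) := by
        have hpt : ∀ n : ℕ, f (n + 2)
            = (1/2)^3 * ((((n:ℝ) - (b-3))^2) * (1/2)^n) := by
          intro n
          simp only [hf]
          push_cast
          rw [key ((n:ℝ)+2+1) (by nlinarith [Nat.cast_nonneg (α := ℝ) n])]
          rw [one_div, one_div, pow_add, mul_inv, inv_pow]
          ring_nf
          simp only [one_div]; ring
        rw [tsum_congr hpt, tsum_mul_left, sumT]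
      have hhead : ∑ i ∈ Finset.range 2, f i
          = (1/2) * (1 - a)^2 + (1/4) * (2 - a)^2 := by
        rw [Finset.sum_range_succ, Finset.sum_range_one]
        simp only [hf]
        push_cast
        rw [keyL ((0:ℝ)+1) (by linarith), keyL ((1:ℝ)+1) (by linarith)]
        norm_num
      rw [htail, hhead]
      nlinarith [sq_nonneg (3*a-4), sq_nonneg (b-4)]
    · rcases le_or_gt (a+b) 8 with h3 | h3
      · -- 3 ≤ midpoint ≤ 4
        rw [← Summable.sum_add_tsum_nat_add 3 hsf]
        have htail : ∑' n : ℕ, f (n + 3) = (1/2)^4 * (2*(b-4)^2 - 4*(b-4) + 6) := by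
          have hpt : ∀ n : ℕ, f (n + 3)
              = (1/2)^4 * ((((n:ℝ) - (b-4))^2) * (1/2)^n) := by
            intro n
            simp only [hf]
            push_cast
            rw [key ((n:ℝ)+3+1) (by nlinarith [Nat.cast_nonneg (α := ℝ) n])]
            rw [one_div, one_div, pow_add, mul_inv, inv_pow]
            ring_nf
            simp only [one_div]; ring
          rw [tsum_congr hpt, tsum_mul_left, sumT]
        have hhead : ∑ i ∈ Finset.range 3, f i
            = (1/2) * (1 - a)^2 + (1/4) * (2 - a)^2 + (1/8) * (3 - a)^2 := by
          rw [Finset.sum_range_succ, Finset.sum_range_succ, Finset.sum_range_one]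
          simp only [hf]
          push_cast
          rw [keyL ((0:ℝ)+1) (by linarith), keyL ((1:ℝ)+1) (by linarith),
            keyL ((2:ℝ)+1) (by linarith)]
          norm_num
        rw [htail, hhead]
        nlinarith [sq_nonneg (7*a-11), sq_nonneg (b-5)]
      · -- midpoint ≥ 4
        rw [← Summable.sum_add_tsum_nat_add 4 hsf]
        have htail : 0 ≤ ∑' n : ℕ, f (n + 4) :=
          tsum_nonneg (fun n => minNonneg a b (n+4))
        have hhead : ∑ i ∈ Finset.range 4, f i
            = (1/2) * (1 - a)^2 + (1/4) * (2 - a)^2 + (1/8) * (3 - a)^2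
              + (1/16) * (4 - a)^2 := by
          rw [Finset.sum_range_succ, Finset.sum_range_succ, Finset.sum_range_succ,
            Finset.sum_range_one]
          simp only [hf]
          push_cast
          rw [keyL ((0:ℝ)+1) (by linarith), keyL ((1:ℝ)+1) (by linarith),
            keyL ((2:ℝ)+1) (by linarith), keyL ((3:ℝ)+1) (by linarith)]
          norm_num
        rw [hhead]
        nlinarith [sq_nonneg (15*a-26)]

/-- Distortion error of a nonempty finite set α for the measure P({n}) = 1/2^n, n ≥ 1. -/
noncomputable def errG (α : Finset ℝ) (h : α.Nonempty) : ℝ :=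
  ∑' n : ℕ, (1/2^(n+1) : ℝ) * α.inf' h (fun a => ((n+1 : ℝ) - a)^2)

lemma errG_opt : errG {4/3, 4} (by simp) = 2/3 := by
  have hinf : ∀ n : ℕ, ({4/3, 4} : Finset ℝ).inf' (by simp) (fun a => ((n+1 : ℝ) - a)^2)
      = min (((n:ℝ)+1 - 4/3)^2) (((n:ℝ)+1 - 4)^2) := by
    intro n
    apply le_antisymm
    · exact le_min (Finset.inf'_le _ (by norm_num)) (Finset.inf'_le _ (by norm_num))
    · apply Finset.le_inf'
      intro y hy
      rcases Finset.mem_insert.mp hy with rfl | hy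
      · exact min_le_left _ _
      · rw [Finset.mem_singleton] at hy; subst hy; exact min_le_right _ _
  have heq : errG {4/3, 4} (by simp)
      = ∑' n : ℕ, (1/2^(n+1) : ℝ) * min (((n:ℝ)+1 - 4/3)^2) (((n:ℝ)+1 - 4)^2) := by
    unfold errG
    exact tsum_congr (fun n => by rw [hinf n])
  rw [heq]
  set f : ℕ → ℝ := fun n => (1/2^(n+1) : ℝ) * min (((n:ℝ)+1 - 4/3)^2) (((n:ℝ)+1 - 4)^2)
    with hf
  have hsf : Summable f := summMin _ _
  rw [← Summable.sum_add_tsum_nat_add 2 hsf]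
  have htail : ∑' n : ℕ, f (n + 2) = (1/2)^3 * (2*((4:ℝ)-3)^2 - 4*((4:ℝ)-3) + 6) := by
    have hpt : ∀ n : ℕ, f (n + 2)
        = (1/2)^3 * ((((n:ℝ) - ((4:ℝ)-3))^2) * (1/2)^n) := by
      intro n
      simp only [hf]
      push_cast
      rw [min_eq_right (by nlinarith [Nat.cast_nonneg (α := ℝ) n])]
      rw [one_div, one_div, pow_add, mul_inv, inv_pow]
      ring_nf
      simp only [one_div]; ring
    rw [tsum_congr hpt, tsum_mul_left, sumT]
  rw [htail]
  rw [Finset.sum_range_succ, Finset.sum_range_one]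
  simp only [hf]
  norm_num

theorem stmt12 :
    sInf {v : ℝ | ∃ (α : Finset ℝ) (h : α.Nonempty), α.card ≤ 2 ∧ v = errG α h}
      = 2/3 ∧
    errG {4/3, 4} (by simp) = 2/3 := by
  have hopt := errG_opt
  constructor
  · set S := {v : ℝ | ∃ (α : Finset ℝ) (h : α.Nonempty), α.card ≤ 2 ∧ v = errG α h} with hS
    have hmem : (2/3 : ℝ) ∈ S := by
      refine ⟨{4/3, 4}, by simp, ?_, hopt.symm⟩
      exact le_trans (Finset.card_insert_le _ _) (by simp)
    have hlb : ∀ v ∈ S, 2/3 ≤ v := by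
      rintro v ⟨α, h, hcard, rfl⟩
      set a := α.min' h with ha
      set b := α.max' h with hb
      have hab : a ≤ b := α.min'_le b (α.max'_mem h)
      have hmem2 : ∀ x ∈ α, x = a ∨ x = b := by
        intro x hx
        by_contra hc
        push_neg at hc
        have h3 : 2 < α.card := by
          rw [Finset.two_lt_card]
          have hax : a < x := lt_of_le_of_ne (α.min'_le x hx) (fun e => hc.1 e.symm)
          have hxb : x < b := lt_of_le_of_ne (α.le_max' x hx) hc.2
          exact ⟨a, α.min'_mem h, x, hx, b, α.max'_mem h, ne_of_lt hax,
            ne_of_lt (hax.trans hxb), ne_of_lt hxb⟩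
        omega
      have hptwise : ∀ n : ℕ,
          (1/2^(n+1) : ℝ) * min (((n:ℝ)+1 - a)^2) (((n:ℝ)+1 - b)^2)
            ≤ (1/2^(n+1) : ℝ) * α.inf' h (fun c => ((n+1 : ℝ) - c)^2) := by
        intro n
        apply mul_le_mul_of_nonneg_left _ (by positivity)
        apply Finset.le_inf'
        intro y hy
        rcases hmem2 y hy with rfl | rfl
        · exact min_le_left _ _
        · exact min_le_right _ _
      have hsummErr : Summable (fun n : ℕ =>
          (1/2^(n+1) : ℝ) * α.inf' h (fun c => ((n+1 : ℝ) - c)^2)) := by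
        apply Summable.of_nonneg_of_le (fun n => ?_) (fun n => ?_) (summQ a)
        · apply mul_nonneg (by positivity)
          apply Finset.le_inf'
          intro y _; exact sq_nonneg _
        · apply mul_le_mul_of_nonneg_left _ (by positivity)
          exact Finset.inf'_le _ (α.min'_mem h)
      calc (2:ℝ)/3 ≤ ∑' n : ℕ, (1/2^(n+1) : ℝ)
              * min (((n:ℝ)+1 - a)^2) (((n:ℝ)+1 - b)^2) := lowerBound a b hab
        _ ≤ errG α h := Summable.tsum_le_tsum hptwise (summMin a b) hsummErr
    refine le_antisymm (csInf_le ⟨2/3, hlb⟩ hmem) (le_csInf ⟨2/3, hmem⟩ hlb)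
  · exact hopt
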